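/- Let N ≥ 1, let a, b ∈ ℂ \ {0}, and let P_I be the N×N bidiagonal Toeplitz matrix. Fix s ∈ ℂ with s² = ab. Then the spectrum of P_I consists exactly of the N values z(ν) = 2 s cos(π ν /(N+1)) for ν = 1, …, N; these N values are pairwise distinct and each is a simple eigenvalue (a simple root of the characteristic polynomial of P_I). -/

import Mathlib

noncomputable section

/-- The N×N bidiagonal Toeplitz matrix with `a` on the first superdiagonal and
`b` on the first subdiagonal. -/
def PIMatrix (N : ℕ) (a b : ℂ) : Matrix (Fin N) (Fin N) ℂ :=
  fun j k => if (j : ℕ) + 1 = (k : ℕ) then a else if (k : ℕ) + 1 = (j : ℕ) then b else 0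

open Polynomial in
lemma eval_charpoly_aux {n : ℕ} (M : Matrix (Fin n) (Fin n) ℂ) (z : ℂ) :
    M.charpoly.eval z = (z • (1 : Matrix (Fin n) (Fin n) ℂ) - M).det := by
  rw [Matrix.charpoly, ← Polynomial.coe_evalRingHom, RingHom.map_det]
  congr 1
  ext i j
  by_cases h : i = j
  · subst h
    simp [Matrix.charmatrix_apply, Matrix.one_apply]
  · simp [Matrix.charmatrix_apply_ne _ _ _ h, Matrix.one_apply, h]

/-- The spectrum of `P_I` consists exactly of the `N` pairwise distinct simple
eigenvalues `z(ν) = 2 s cos(π ν/(N+1))`, `ν = 1,…,N`, where `s² = ab`: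
the multiset of roots of the characteristic polynomial equals the image of
`{1,…,N}` under `ν ↦ z(ν)`, and `ν ↦ z(ν)` is injective on `{1,…,N}`. -/
theorem spectrum_PI (N : ℕ) (hN : 1 ≤ N) (a b : ℂ) (ha : a ≠ 0) (hb : b ≠ 0)
    (s : ℂ) (hs : s ^ 2 = a * b) :
    (Matrix.charpoly (PIMatrix N a b)).roots
        = (Finset.Icc 1 N).val.map
            (fun ν : ℕ => 2 * s * Complex.cos ((Real.pi * ν / (N + 1) : ℝ) : ℂ))
      ∧ ∀ ν ∈ Finset.Icc 1 N, ∀ μ ∈ Finset.Icc 1 N,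
          2 * s * Complex.cos ((Real.pi * ν / (N + 1) : ℝ) : ℂ)
            = 2 * s * Complex.cos ((Real.pi * μ / (N + 1) : ℝ) : ℂ) → ν = μ := by
  have hs0 : s ≠ 0 := by
    intro h
    rw [h] at hs
    exact mul_ne_zero ha hb (by simpa using hs.symm)
  set z : ℕ → ℂ := fun ν => 2 * s * Complex.cos ((Real.pi * ν / (N + 1) : ℝ) : ℂ) with hzdef
  have hNpos : (0 : ℝ) < (N : ℝ) + 1 := by positivity
  -- angles
  have hmem : ∀ ν ∈ Finset.Icc 1 N, (Real.pi * ν / (N + 1)) ∈ Set.Icc (0:ℝ) Real.pi := by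
    intro ν hν
    simp only [Finset.mem_Icc] at hν
    constructor
    · positivity
    · rw [div_le_iff₀ hNpos]
      have : (ν : ℝ) ≤ (N : ℝ) + 1 := by exact_mod_cast le_trans hν.2 (Nat.le_succ N)
      nlinarith [Real.pi_pos]
  -- injectivity
  have hinj : ∀ ν ∈ Finset.Icc 1 N, ∀ μ ∈ Finset.Icc 1 N, z ν = z μ → ν = μ := by
    intro ν hν μ hμ h
    have h2s : (2 : ℂ) * s ≠ 0 := by simp [hs0]
    have hc : Complex.cos ((Real.pi * ν / (N + 1) : ℝ) : ℂ)
        = Complex.cos ((Real.pi * μ / (N + 1) : ℝ) : ℂ) :=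
      mul_left_cancel₀ h2s h
    rw [← Complex.ofReal_cos, ← Complex.ofReal_cos] at hc
    have hc' : Real.cos (Real.pi * ν / (N + 1)) = Real.cos (Real.pi * μ / (N + 1)) := by
      exact_mod_cast hc
    have := Real.injOn_cos (hmem ν hν) (hmem μ hμ) hc'
    have hν' : (ν : ℝ) = μ := by
      exact mul_left_cancel₀ Real.pi_ne_zero ((div_left_inj' hNpos.ne').mp this)
    exact_mod_cast hν'
  refine ⟨?_, hinj⟩
  -- each z ν is a root via an explicit eigenvector
  have hroot : ∀ ν ∈ Finset.Icc 1 N, (Matrix.charpoly (PIMatrix N a b)).IsRoot (z ν) := by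
    intro ν hν
    simp only [Finset.mem_Icc] at hν
    set θ : ℝ := Real.pi * ν / (N + 1) with hθdef
    set t : ℂ := s / a with htdef
    have ht0 : t ≠ 0 := div_ne_zero hs0 ha
    have hat : a * t = s := by rw [htdef]; field_simp
    have hbt : b = s * t := by
      rw [htdef]
      field_simp
      linear_combination -hs
    set W : ℕ → ℂ := fun j => t ^ j * Complex.sin ((j : ℂ) * (θ : ℂ)) with hWdef
    have hW0 : W 0 = 0 := by simp [hWdef]
    have hθN : ((N : ℝ) + 1) * θ = ν * Real.pi := by
      rw [hθdef]
      field_simp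
    have hWN : W (N + 1) = 0 := by
      simp only [hWdef]
      have h1 := congrArg (fun x : ℝ => (x : ℂ)) hθN
      push_cast at h1
      have : ((N + 1 : ℕ) : ℂ) * (θ : ℂ) = ((ν * Real.pi : ℝ) : ℂ) := by
        push_cast
        exact h1
      rw [this, ← Complex.ofReal_sin, Real.sin_nat_mul_pi]
      simp
    have hrec : ∀ j : ℕ, a * W (j + 2) + b * W j = z ν * W (j + 1) := by
      intro j
      simp only [hWdef, hzdef]
      rw [← hθdef]
      push_cast
      have e1 : ((j : ℂ) + 2) * (θ : ℂ) = ((j : ℂ) + 1) * θ + θ := by ring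
      have e2 : (j : ℂ) * (θ : ℂ) = ((j : ℂ) + 1) * θ - θ := by ring
      rw [e1, e2, Complex.sin_add, Complex.sin_sub]
      rw [hbt]
      have h3 : a * t ^ (j + 2) = s * t ^ (j + 1) := by
        linear_combination t ^ (j + 1) * hat
      linear_combination (Complex.sin (((j : ℂ) + 1) * (θ:ℂ)) * Complex.cos (θ:ℂ)
        + Complex.cos (((j : ℂ) + 1) * (θ:ℂ)) * Complex.sin (θ:ℂ)) * h3
    -- the eigenvector
    set v : Fin N → ℂ := fun j => W ((j : ℕ) + 1) with hvdef
    have hθpos : 0 < θ := by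
      rw [hθdef]
      have : (0 : ℝ) < ν := by exact_mod_cast hν.1
      positivity
    have hθlt : θ < Real.pi := by
      rw [hθdef, div_lt_iff₀ hNpos]
      have h1 : (ν : ℝ) < (N : ℝ) + 1 := by exact_mod_cast Nat.lt_succ_of_le hν.2
      nlinarith [Real.pi_pos]
    have hv0 : v ≠ 0 := by
      intro h
      have h1 : W 1 = 0 := by
        have h2 := congrFun h ⟨0, hN⟩
        simpa [hvdef] using h2
      rw [hWdef] at h1
      simp only [pow_one, Nat.cast_one, one_mul] at h1
      rcases mul_eq_zero.mp h1 with h2 | h2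
      · exact ht0 h2
      · have : Complex.sin ((θ : ℂ)) ≠ 0 := by
          have hsp : Real.sin θ ≠ 0 := ne_of_gt (Real.sin_pos_of_pos_of_lt_pi hθpos hθlt)
          rw [← Complex.ofReal_sin]
          exact_mod_cast hsp
        exact this h2
    -- mulVec computation
    have hmul : (z ν • (1 : Matrix (Fin N) (Fin N) ℂ) - PIMatrix N a b).mulVec v = 0 := by
      funext i
      have hMv : ((PIMatrix N a b).mulVec v) i = a * W ((i : ℕ) + 2) + b * W (i : ℕ) := by
        have hterm : ∀ k : Fin N, PIMatrix N a b i k * v k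
            = (if (k : ℕ) = (i : ℕ) + 1 then a * W ((k : ℕ) + 1) else 0)
              + (if (k : ℕ) + 1 = (i : ℕ) then b * W ((k : ℕ) + 1) else 0) := by
          intro k
          simp only [PIMatrix, hvdef]
          split_ifs with h1 h2 h3 h4 h5 <;> first | omega | ring
        rw [Matrix.mulVec, dotProduct]
        rw [Finset.sum_congr rfl (fun k _ => hterm k), Finset.sum_add_distrib]
        have hsum1 : (∑ k : Fin N, if (k : ℕ) = (i : ℕ) + 1 then a * W ((k : ℕ) + 1) else 0)
            = a * W ((i : ℕ) + 2) := by
          rw [Fin.sum_univ_eq_sum_range (fun k => if k = (i : ℕ) + 1 then a * W (k + 1) else 0)]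
          rw [Finset.sum_ite_eq' (Finset.range N) ((i : ℕ) + 1) (fun k => a * W (k + 1))]
          by_cases h : (i : ℕ) + 1 ∈ Finset.range N
          · rw [if_pos h]
          · rw [if_neg h]
            have h2 : (i : ℕ) + 2 = N + 1 := by
              have := i.2
              simp only [Finset.mem_range] at h
              omega
            rw [h2, hWN, mul_zero]
        have hsum2 : (∑ k : Fin N, if (k : ℕ) + 1 = (i : ℕ) then b * W ((k : ℕ) + 1) else 0)
            = b * W (i : ℕ) := by
          rw [Fin.sum_univ_eq_sum_range (fun k => if k + 1 = (i : ℕ) then b * W (k + 1) else 0)]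
          rcases Nat.eq_zero_or_pos (i : ℕ) with h0 | hpos
          · rw [h0, hW0, mul_zero]
            apply Finset.sum_eq_zero
            intro k _
            rw [if_neg (by omega)]
          · obtain ⟨m, hm⟩ : ∃ m, (i : ℕ) = m + 1 := ⟨(i : ℕ) - 1, by omega⟩
            rw [hm]
            have hcong : ∀ k ∈ Finset.range N,
                (if k + 1 = m + 1 then b * W (k + 1) else 0)
                  = (if k = m then b * W (k + 1) else 0) := by
              intro k _
              congr 1
              simp
            rw [Finset.sum_congr rfl hcong,
              Finset.sum_ite_eq' (Finset.range N) m (fun k => b * W (k + 1))]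
            rw [if_pos (Finset.mem_range.mpr (by have := i.2; omega))]
        rw [hsum1, hsum2]
      have : ((z ν • (1 : Matrix (Fin N) (Fin N) ℂ) - PIMatrix N a b).mulVec v) i
          = z ν * v i - ((PIMatrix N a b).mulVec v) i := by
        rw [Matrix.sub_mulVec, Matrix.smul_mulVec, Matrix.one_mulVec]
        simp
      rw [Pi.zero_apply, this, hMv]
      simp only [hvdef]
      linear_combination -(hrec (i : ℕ))
    have hdet : (z ν • (1 : Matrix (Fin N) (Fin N) ℂ) - PIMatrix N a b).det = 0 := by
      rw [← Matrix.exists_mulVec_eq_zero_iff]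
      exact ⟨v, hv0, hmul⟩
    rw [Polynomial.IsRoot, eval_charpoly_aux]
    exact hdet
  -- assemble the multiset equality
  set m : Multiset ℂ := (Finset.Icc 1 N).val.map z with hmdef
  have hp0 : Matrix.charpoly (PIMatrix N a b) ≠ 0 :=
    (Matrix.charpoly_monic _).ne_zero
  have hnodup : m.Nodup := by
    apply Multiset.Nodup.map_on
    · intro x hx y hy hxy
      exact hinj x hx y hy hxy
    · exact (Finset.Icc 1 N).nodup
  have hsub : m ≤ (Matrix.charpoly (PIMatrix N a b)).roots := by
    rw [Multiset.le_iff_count]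
    intro c
    by_cases hc : c ∈ m
    · have h1 : m.count c ≤ 1 := (Multiset.nodup_iff_count_le_one.mp hnodup) c
      have h2 : 1 ≤ ((Matrix.charpoly (PIMatrix N a b)).roots).count c := by
        rw [Nat.one_le_iff_ne_zero, ← Nat.pos_iff_ne_zero, Multiset.count_pos]
        obtain ⟨ν, hν, rfl⟩ := Multiset.mem_map.mp hc
        exact Polynomial.mem_roots'.mpr ⟨hp0, hroot ν hν⟩
      omega
    · rw [Multiset.count_eq_zero_of_notMem hc]
      exact Nat.zero_le _
  have hcardm : Multiset.card m = N := by
    rw [hmdef, Multiset.card_map]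
    simpa using Nat.card_Icc 1 N
  have hcardr : Multiset.card (Matrix.charpoly (PIMatrix N a b)).roots ≤ N := by
    have h1 := Polynomial.card_roots' (Matrix.charpoly (PIMatrix N a b))
    rwa [Matrix.charpoly_natDegree_eq_dim, Fintype.card_fin] at h1
  exact (Multiset.eq_of_le_of_card_le hsub (by omega)).symm
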